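/- arXiv:2604.01211 — 3 statements merged into one kernel-verified Lean document; each statement's English description precedes it below -/
import Mathlib

section
/- Second derivative formula: with f(ρ) = tr((C_x⁻¹ + Hᵀ diag(ρ) H)⁻¹) and C_ε = (C_x⁻¹ + Hᵀ diag(ρ) H)⁻¹, the second partial derivative ∂²f/∂ρ_j ∂ρ_i equals 2 tr(C_ε h_i h_iᵀ C_ε h_j h_jᵀ C_ε) = 2 (h_iᵀ C_ε h_j)(h_iᵀ C_ε² h_j). -/
open Matrix


attribute [local instance] Matrix.linftyOpNormedRing Matrix.linftyOpNormedAlgebra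

namespace Stmt8Aux

variable {m d : ℕ}


lemma line_deriv (A E : Matrix (Fin d) (Fin d) ℝ) (c x : ℝ) :
    HasDerivAt (fun s : ℝ => A + (s - c) • E) E x := by
  have h := (((hasDerivAt_id x).sub_const c).smul_const E).const_add A
  simp only [one_smul] at h
  exact h

lemma inv_line_deriv (A E : Matrix (Fin d) (Fin d) ℝ) (hA : IsUnit A) (c : ℝ) :
    HasDerivAt (fun s : ℝ => Ring.inverse (A + (s - c) • E)) (-(A⁻¹ * E * A⁻¹)) c := by
  have h1 := line_deriv A E c c
  have h2 := (hasFDerivAt_ringInverse (𝕜 := ℝ) hA.unit)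
  have hAc : A + (c - c) • E = A := by simp
  rw [hA.unit_spec] at h2
  have h2' : HasFDerivAt Ring.inverse
      (-((ContinuousLinearMap.mulLeftRight ℝ (Matrix (Fin d) (Fin d) ℝ)) ↑hA.unit⁻¹) ↑hA.unit⁻¹)
      (A + (c - c) • E) := by rw [hAc]; exact h2
  have h3 := h2'.comp_hasDerivAt c h1
  simp [Matrix.nonsing_inv_eq_ringInverse, Ring.inverse_unit,
    ContinuousLinearMap.mulLeftRight_apply, hA.unit_spec] at h3 ⊢
  exact h3

noncomputable def trCLM (d : ℕ) : Matrix (Fin d) (Fin d) ℝ →L[ℝ] ℝ :=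
  LinearMap.toContinuousLinearMap (Matrix.traceLinearMap (Fin d) ℝ ℝ)

lemma trace_comp_deriv {F : ℝ → Matrix (Fin d) (Fin d) ℝ} {F' : Matrix (Fin d) (Fin d) ℝ} {x : ℝ}
    (h : HasDerivAt F F' x) : HasDerivAt (fun t => (F t).trace) F'.trace x := by
  have := (trCLM d).hasFDerivAt.comp_hasDerivAt x h
  exact this


lemma rank_one (H : Matrix (Fin m) (Fin d) ℝ) (k : Fin m) :
    Hᵀ * Matrix.diagonal (Pi.single k (1:ℝ)) * H = vecMulVec (H k) (H k) := by
  ext a b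
  simp [Matrix.mul_apply, Matrix.diagonal_apply, Pi.single_apply, vecMulVec_apply,
    Finset.sum_ite_eq, ite_mul, mul_ite]

lemma update_eq (H : Matrix (Fin m) (Fin d) ℝ) (Cx : Matrix (Fin d) (Fin d) ℝ)
    (q : Fin m → ℝ) (k : Fin m) (s : ℝ) :
    Cx⁻¹ + Hᵀ * Matrix.diagonal (Function.update q k s) * H
      = (Cx⁻¹ + Hᵀ * Matrix.diagonal q * H) + (s - q k) • vecMulVec (H k) (H k) := by
  have hd : Matrix.diagonal (Function.update q k s)
      = Matrix.diagonal q + (s - q k) • Matrix.diagonal (Pi.single k (1:ℝ)) := by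
    ext a b
    by_cases hab : a = b
    · subst hab
      by_cases hak : a = k <;>
        simp [hak, Matrix.diagonal_apply, Function.update_apply, Pi.single_apply] <;> ring
    · simp [hab, Matrix.diagonal_apply]
  rw [hd, Matrix.mul_add, Matrix.add_mul, Matrix.mul_smul, Matrix.smul_mul, rank_one, add_assoc]

lemma trace_vmv (A : Matrix (Fin d) (Fin d) ℝ) (u v : Fin d → ℝ) :
    (vecMulVec u v * A).trace = v ⬝ᵥ A *ᵥ u := by
  simp only [Matrix.trace, Matrix.diag, Matrix.mul_apply, vecMulVec_apply, dotProduct,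
    Matrix.mulVec, Finset.mul_sum]
  rw [Finset.sum_comm]
  exact Finset.sum_congr rfl fun b _ => Finset.sum_congr rfl fun a _ => by ring

lemma vmv_mulVec (u v w : Fin d → ℝ) : vecMulVec u v *ᵥ w = (v ⬝ᵥ w) • u := by
  ext a
  simp [Matrix.mulVec, vecMulVec_apply, dotProduct, Finset.mul_sum, mul_comm, mul_left_comm]

lemma dot_symm (S : Matrix (Fin d) (Fin d) ℝ) (hS : Sᵀ = S) (u v : Fin d → ℝ) :
    u ⬝ᵥ S *ᵥ v = v ⬝ᵥ S *ᵥ u := by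
  rw [Matrix.dotProduct_mulVec, ← Matrix.mulVec_transpose, hS, dotProduct_comm]

lemma tr5 (C : Matrix (Fin d) (Fin d) ℝ) (hC : Cᵀ = C) (u v : Fin d → ℝ) :
    (C * vecMulVec u u * C * vecMulVec v v * C).trace
      = (u ⬝ᵥ C *ᵥ v) * (u ⬝ᵥ (C * C) *ᵥ v) := by
  have h1 : C * vecMulVec u u * C * vecMulVec v v * C
      = C * (vecMulVec u u * (C * (vecMulVec v v * C))) := by
    simp only [mul_assoc]
  rw [h1, trace_mul_comm, mul_assoc, trace_vmv]
  have hCC : (C * C)ᵀ = C * C := by rw [Matrix.transpose_mul, hC]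
  have h3 : (C * (vecMulVec v v * C)) * C = C * (vecMulVec v v * (C * C)) := by
    simp only [mul_assoc]
  rw [h3, ← Matrix.mulVec_mulVec, ← Matrix.mulVec_mulVec, vmv_mulVec, Matrix.mulVec_smul,
    dotProduct_smul, smul_eq_mul, dot_symm (C * C) hCC v u]
  ring

lemma posdef_M (H : Matrix (Fin m) (Fin d) ℝ) (Cx : Matrix (Fin d) (Fin d) ℝ)
    (hCx : Cx.PosDef) (p : Fin m → ℝ) (hp : ∀ k, 0 ≤ p k) :
    (Cx⁻¹ + Hᵀ * Matrix.diagonal p * H).PosDef := by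
  have h1 : (Matrix.diagonal p).PosSemidef := Matrix.posSemidef_diagonal_iff.2 hp
  have h2 := h1.conjTranspose_mul_mul_same H
  have hH : Hᴴ = Hᵀ := by ext a b; simp [Matrix.conjTranspose_apply]
  rw [hH] at h2
  exact hCx.inv.add_posSemidef h2

lemma posdef_isUnit {A : Matrix (Fin d) (Fin d) ℝ} (hA : A.PosDef) : IsUnit A :=
  (Matrix.isUnit_iff_isUnit_det _).2 (isUnit_iff_ne_zero.2 hA.det_pos.ne')

end Stmt8Aux

section
attribute [local instance] Matrix.linftyOpNormedRing Matrix.linftyOpNormedAlgebra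

/-- Second derivative formula: with
`f(ρ) = tr((C_x⁻¹ + Hᵀ diag(ρ) H)⁻¹)` and `C_ε = (C_x⁻¹ + Hᵀ diag(ρ) H)⁻¹`,
the second partial derivative `∂²f/∂ρ_j ∂ρ_i` equals
`2 (h_iᵀ C_ε h_j)(h_iᵀ C_ε² h_j)`. -/
theorem stmt8 {m d : ℕ} (H : Matrix (Fin m) (Fin d) ℝ)
    (Cx : Matrix (Fin d) (Fin d) ℝ) (hCx : Cx.PosDef)
    (ρ : Fin m → ℝ) (hρ : ∀ i, 0 < ρ i) (i j : Fin m)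
    (f : (Fin m → ℝ) → ℝ)
    (hf : f = fun p => (Cx⁻¹ + Hᵀ * Matrix.diagonal p * H)⁻¹.trace)
    (Ce : Matrix (Fin d) (Fin d) ℝ)
    (hCe : Ce = (Cx⁻¹ + Hᵀ * Matrix.diagonal ρ * H)⁻¹) :
    HasDerivAt
      (fun t : ℝ =>
        deriv (fun s : ℝ => f (Function.update (Function.update ρ j t) i s))
          (Function.update ρ j t i))
      (2 * (H i ⬝ᵥ Ce *ᵥ H j) * (H i ⬝ᵥ (Ce ^ 2) *ᵥ H j))
      (ρ j) := by

  classical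
  set A : Matrix (Fin d) (Fin d) ℝ := Cx⁻¹ + Hᵀ * Matrix.diagonal ρ * H with hA_def
  set Ei : Matrix (Fin d) (Fin d) ℝ := vecMulVec (H i) (H i) with hEi
  set Ej : Matrix (Fin d) (Fin d) ℝ := vecMulVec (H j) (H j) with hEj
  have hA_pd : A.PosDef := Stmt8Aux.posdef_M H Cx hCx ρ fun k => (hρ k).le
  have hAU : IsUnit A := Stmt8Aux.posdef_isUnit hA_pd
  -- the auxiliary function φ
  set φ : ℝ → ℝ := fun t =>
    -((Ring.inverse (A + (t - ρ j) • Ej) * Ei * Ring.inverse (A + (t - ρ j) • Ej)).trace)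
    with hφ
  -- Step 1: eventual equality near ρ j
  have hev : (fun t : ℝ =>
      deriv (fun s : ℝ => f (Function.update (Function.update ρ j t) i s))
        (Function.update ρ j t i)) =ᶠ[nhds (ρ j)] φ := by
    filter_upwards [Ioi_mem_nhds (hρ j)] with t ht
    have hq : ∀ k, (0:ℝ) ≤ Function.update ρ j t k := by
      intro k
      rcases eq_or_ne k j with rfl | hk
      · simp [le_of_lt (Set.mem_Ioi.mp ht)]
      · simp [Function.update_apply, hk, (hρ k).le]
    have hNt_eq : Cx⁻¹ + Hᵀ * Matrix.diagonal (Function.update ρ j t) * H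
        = A + (t - ρ j) • Ej := Stmt8Aux.update_eq H Cx ρ j t
    have hNt_pd : (A + (t - ρ j) • Ej).PosDef := by
      rw [← hNt_eq]; exact Stmt8Aux.posdef_M H Cx hCx _ hq
    have hNtU : IsUnit (A + (t - ρ j) • Ej) := Stmt8Aux.posdef_isUnit hNt_pd
    have hfun : (fun s : ℝ => f (Function.update (Function.update ρ j t) i s))
        = fun s : ℝ => (Ring.inverse
            ((A + (t - ρ j) • Ej) + (s - Function.update ρ j t i) • Ei)).trace := by
      funext s
      simp only [hf]
      rw [show Cx⁻¹ + Hᵀ * Matrix.diagonal (Function.update (Function.update ρ j t) i s) * H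
          = (A + (t - ρ j) • Ej) + (s - Function.update ρ j t i) • Ei from by
        rw [Stmt8Aux.update_eq H Cx (Function.update ρ j t) i s, hNt_eq]]
      rw [Matrix.nonsing_inv_eq_ringInverse]
    rw [hfun]
    have hd := Stmt8Aux.trace_comp_deriv
      (Stmt8Aux.inv_line_deriv (A + (t - ρ j) • Ej) Ei hNtU (Function.update ρ j t i))
    rw [hd.deriv, hφ]
    rw [Matrix.nonsing_inv_eq_ringInverse, Matrix.trace_neg]
  -- Step 2: HasDerivAt φ
  have h1 : HasDerivAt (fun t : ℝ => Ring.inverse (A + (t - ρ j) • Ej))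
      (-(A⁻¹ * Ej * A⁻¹)) (ρ j) := Stmt8Aux.inv_line_deriv A Ej hAU (ρ j)
  have h2 := (h1.mul_const Ei).mul h1
  have h3 := (Stmt8Aux.trace_comp_deriv h2).neg
  refine HasDerivAt.congr_of_eventuallyEq ?_ hev
  convert h3 using 1
  · rfl
  -- Step 3: compute the value
  have hRA : Ring.inverse (A + (ρ j - ρ j) • Ej) = Ce := by
    rw [← Matrix.nonsing_inv_eq_ringInverse]
    simp [hCe, hA_def]
  simp only [hRA]
  have hCeA : Ce = A⁻¹ := by rw [hCe, hA_def]
  have hAT : Aᵀ = A := by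
    conv_rhs => rw [← hA_pd.isHermitian.eq]
    ext a b; simp [Matrix.conjTranspose_apply]
  have hCT : Ceᵀ = Ce := by
    rw [hCeA, Matrix.transpose_nonsing_inv, hAT]
  rw [← hCeA]
  have e1 : (Ce * Ej * Ce * Ei * Ce).trace
      = (H j ⬝ᵥ Ce *ᵥ H i) * (H j ⬝ᵥ (Ce * Ce) *ᵥ H i) := Stmt8Aux.tr5 Ce hCT (H j) (H i)
  have e2 : (Ce * Ei * Ce * Ej * Ce).trace
      = (H i ⬝ᵥ Ce *ᵥ H j) * (H i ⬝ᵥ (Ce * Ce) *ᵥ H j) := Stmt8Aux.tr5 Ce hCT (H i) (H j)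
  have s1 : H j ⬝ᵥ Ce *ᵥ H i = H i ⬝ᵥ Ce *ᵥ H j := Stmt8Aux.dot_symm Ce hCT (H j) (H i)
  have s2 : H j ⬝ᵥ (Ce * Ce) *ᵥ H i = H i ⬝ᵥ (Ce * Ce) *ᵥ H j :=
    Stmt8Aux.dot_symm (Ce * Ce) (by rw [Matrix.transpose_mul, hCT]) (H j) (H i)
  have expand : -((-(Ce * Ej * Ce) * Ei * Ce + Ce * Ei * -(Ce * Ej * Ce)).trace)
      = (Ce * Ej * Ce * Ei * Ce).trace + (Ce * Ei * Ce * Ej * Ce).trace := by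
    simp only [Matrix.trace_add, neg_mul, mul_neg, Matrix.trace_neg, mul_assoc]
    ring
  rw [sq]
  rw [expand, e1, e2, s1, s2]
  ring
end
end

section
/- Hessian entry bound: in the setting above, ρ_i ρ_j |∂²f/∂ρ_j ∂ρ_i| ≤ 2‖C_x‖₂ for all i, j. -/
open Matrix

noncomputable def specNorm {d : ℕ} (A : Matrix (Fin d) (Fin d) ℝ) : ℝ :=
  ‖Matrix.toEuclideanCLM (𝕜 := ℝ) A‖

section aux
variable {d : ℕ}

lemma quad_le_spec (A : Matrix (Fin d) (Fin d) ℝ) (x : Fin d → ℝ) :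
    x ⬝ᵥ A *ᵥ x ≤ specNorm A * (x ⬝ᵥ x) := by
  set T := Matrix.toEuclideanCLM (𝕜 := ℝ) A with hT
  set ex : EuclideanSpace ℝ (Fin d) := (WithLp.equiv _ _).symm x with hex
  have h1 : T ex = (WithLp.equiv _ _).symm (A *ᵥ x) := Matrix.toEuclideanCLM_toLp A x
  have h2 : x ⬝ᵥ A *ᵥ x = inner ℝ ex (T ex) := by
    exact (Matrix.inner_toEuclideanCLM A ex ex).symm
  have h3 : x ⬝ᵥ x = inner ℝ ex ex := by
    rw [EuclideanSpace.inner_eq_star_dotProduct, star_trivial]; rfl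
  rw [h2, h3]
  calc (inner ℝ ex (T ex) : ℝ) ≤ ‖ex‖ * ‖T ex‖ := real_inner_le_norm _ _
    _ ≤ ‖ex‖ * (‖T‖ * ‖ex‖) := by gcongr; exact T.le_opNorm ex
    _ = ‖T‖ * (‖ex‖ * ‖ex‖) := by ring
    _ = specNorm A * inner ℝ ex ex := by rw [real_inner_self_eq_norm_mul_norm]; rfl

lemma symdot {A : Matrix (Fin d) (Fin d) ℝ} (hA : Aᵀ = A) (u v : Fin d → ℝ) :
    u ⬝ᵥ A *ᵥ v = v ⬝ᵥ A *ᵥ u := by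
  rw [dotProduct_mulVec, ← mulVec_transpose, hA, dotProduct_comm]

lemma csform {A : Matrix (Fin d) (Fin d) ℝ} (hA : Aᵀ = A)
    (hn : ∀ u : Fin d → ℝ, 0 ≤ u ⬝ᵥ A *ᵥ u) (x y : Fin d → ℝ) :
    (x ⬝ᵥ A *ᵥ y) ^ 2 ≤ (x ⬝ᵥ A *ᵥ x) * (y ⬝ᵥ A *ᵥ y) := by
  have key : ∀ t : ℝ, 0 ≤ (y ⬝ᵥ A *ᵥ y) * (t * t) + (2 * (x ⬝ᵥ A *ᵥ y)) * t + (x ⬝ᵥ A *ᵥ x) := by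
    intro t
    have e : (x + t • y) ⬝ᵥ A *ᵥ (x + t • y)
        = x ⬝ᵥ A *ᵥ x + t * (x ⬝ᵥ A *ᵥ y) + t * (y ⬝ᵥ A *ᵥ x) + t * t * (y ⬝ᵥ A *ᵥ y) := by
      simp [mulVec_add, mulVec_smul, dotProduct_add, add_dotProduct, dotProduct_smul,
        smul_dotProduct, smul_eq_mul]
      ring
    have hsym := symdot hA y x
    have := hn (x + t • y)
    rw [e, hsym] at this
    linarith
  have hd := discrim_le_zero key
  rw [discrim] at hd
  nlinarith

lemma dot_finsum {ι : Type*} (s : Finset ι) (u : Fin d → ℝ) (v : ι → Fin d → ℝ) :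
    u ⬝ᵥ (∑ k ∈ s, v k) = ∑ k ∈ s, u ⬝ᵥ v k := by
  simp [dotProduct, Finset.mul_sum, Finset.sum_apply]
  rw [Finset.sum_comm]

lemma finsum_mulVec {ι : Type*} (s : Finset ι) (A : ι → Matrix (Fin d) (Fin d) ℝ)
    (u : Fin d → ℝ) : (∑ k ∈ s, A k) *ᵥ u = ∑ k ∈ s, A k *ᵥ u := by
  funext i
  simp [mulVec, dotProduct, Matrix.sum_apply, Finset.sum_mul, Finset.sum_apply]
  rw [Finset.sum_comm]

lemma vecMulVec_mulVec' (a b u : Fin d → ℝ) :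
    vecMulVec a b *ᵥ u = (b ⬝ᵥ u) • a := by
  funext i
  simp only [mulVec, dotProduct, vecMulVec_apply, Pi.smul_apply, smul_eq_mul, Finset.mul_sum]
  rw [Finset.sum_mul]
  exact Finset.sum_congr rfl fun j _ => by ring

lemma pd_nonneg {A : Matrix (Fin d) (Fin d) ℝ} (hA : A.PosDef) (u : Fin d → ℝ) :
    0 ≤ u ⬝ᵥ A *ᵥ u := by
  rcases eq_or_ne u 0 with rfl | hu
  · simp
  · have := hA.dotProduct_mulVec_pos hu
    simpa using this.le

lemma pd_transpose {A : Matrix (Fin d) (Fin d) ℝ} (hA : A.PosDef) : Aᵀ = A := by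
  have := hA.isHermitian
  simpa [Matrix.IsHermitian, conjTranspose_eq_transpose_of_trivial] using this

lemma dotnn (u : Fin d → ℝ) : 0 ≤ u ⬝ᵥ u :=
  Finset.sum_nonneg fun i _ => mul_self_nonneg _

lemma final_arith (pi pj a b ti tj si sj sp : ℝ) (hpi : 0 < pi) (hpj : 0 < pj)
    (hti : 0 ≤ ti) (htj : 0 ≤ tj) (hsi0 : 0 ≤ si) (hsj0 : 0 ≤ sj) (hsp : 0 ≤ sp)
    (h1 : pi * ti ≤ 1) (h2 : pj * tj ≤ 1) (h3 : a ^ 2 ≤ ti * tj) (h4 : b ^ 2 ≤ sj * si)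
    (h5 : pi * si ≤ sp) (h6 : pj * sj ≤ sp) :
    pi * pj * |2 * a * b| ≤ 2 * sp := by
  rw [abs_mul, abs_mul, abs_two]
  have e1 : pi * pj * a ^ 2 ≤ 1 := by
    nlinarith [mul_le_one₀ h1 (mul_nonneg hpj.le htj) h2,
      mul_le_mul_of_nonneg_left h3 (mul_nonneg hpi.le hpj.le)]
  have e2 : pi * pj * b ^ 2 ≤ sp ^ 2 := by
    nlinarith [mul_le_mul h5 h6 (mul_nonneg hpj.le hsj0) hsp,
      mul_le_mul_of_nonneg_left h4 (mul_nonneg hpi.le hpj.le)]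
  have e0 : 0 ≤ pi * pj * b ^ 2 := by positivity
  have e3 : (pi * pj * (|a| * |b|)) ^ 2 ≤ sp ^ 2 := by
    have e : (pi * pj * (|a| * |b|)) ^ 2 = (pi * pj * a ^ 2) * (pi * pj * b ^ 2) := by
      rw [mul_pow, mul_pow, ← sq_abs a, ← sq_abs b]; ring
    calc (pi * pj * (|a| * |b|)) ^ 2 = (pi * pj * a ^ 2) * (pi * pj * b ^ 2) := e
      _ ≤ 1 * sp ^ 2 := mul_le_mul e1 e2 e0 zero_le_one
      _ = sp ^ 2 := one_mul _
  have exn : 0 ≤ pi * pj * (|a| * |b|) := by positivity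
  have e4 : pi * pj * (|a| * |b|) ≤ sp := by nlinarith [e3, exn, hsp]
  nlinarith [e4]

end aux

/-- Hessian entry bound: with
`C_ε = (C_x⁻¹ + Σ_k ρ_k h_k h_kᵀ)⁻¹`, `C_x ≻ 0`, `ρ > 0` componentwise, and
`∂²f/∂ρ_j∂ρ_i = 2(h_iᵀ C_ε h_j)(h_iᵀ C_ε² h_j)`, one has
`ρ_i ρ_j |∂²f/∂ρ_j ∂ρ_i| ≤ 2‖C_x‖₂` for all `i, j`. -/
theorem stmt9 {m d : ℕ} (Cx : Matrix (Fin d) (Fin d) ℝ) (hCx : Cx.PosDef)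
    (h : Fin m → Fin d → ℝ) (ρ : Fin m → ℝ) (hρ : ∀ i, 0 < ρ i)
    (Ce : Matrix (Fin d) (Fin d) ℝ)
    (hCe : Ce = (Cx⁻¹ + ∑ k, ρ k • Matrix.vecMulVec (h k) (h k))⁻¹)
    (i j : Fin m) :
    ρ i * ρ j *
      |2 * (h i ⬝ᵥ Ce *ᵥ h j) * (h i ⬝ᵥ (Ce ^ 2) *ᵥ h j)| ≤
      2 * specNorm Cx := by
  set M := Cx⁻¹ + ∑ k, ρ k • Matrix.vecMulVec (h k) (h k) with hMdef
  have hCxi : Cx⁻¹.PosDef := hCx.inv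
  have hquad : ∀ u : Fin d → ℝ,
      u ⬝ᵥ M *ᵥ u = u ⬝ᵥ Cx⁻¹ *ᵥ u + ∑ k, ρ k * (h k ⬝ᵥ u) ^ 2 := by
    intro u
    rw [hMdef, add_mulVec, dotProduct_add, finsum_mulVec, dot_finsum]
    congr 1
    refine Finset.sum_congr rfl fun k _ => ?_
    rw [smul_mulVec, vecMulVec_mulVec', dotProduct_smul, dotProduct_smul,
      smul_eq_mul, smul_eq_mul, dotProduct_comm u (h k)]
    ring
  have hMT : Mᵀ = M := by
    rw [hMdef, transpose_add, Matrix.transpose_sum, transpose_nonsing_inv, pd_transpose hCx]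
    congr 1
    refine Finset.sum_congr rfl fun k _ => ?_
    rw [transpose_smul]
    congr 1
    funext a b
    simp [vecMulVec_apply, transpose_apply, mul_comm]
  have hMpos : M.PosDef := by
    refine PosDef.of_dotProduct_mulVec_pos ?_ fun x hx => ?_
    · show Mᴴ = M
      ext a b
      simp only [conjTranspose_apply, star_trivial]
      conv_rhs => rw [← hMT]
      rfl
    · have h1 := hCxi.dotProduct_mulVec_pos hx
      simp only [star_trivial] at h1 ⊢
      rw [hquad]
      have h2 : 0 ≤ ∑ k, ρ k * (h k ⬝ᵥ x) ^ 2 :=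
        Finset.sum_nonneg fun k _ => mul_nonneg (hρ k).le (sq_nonneg _)
      have h3 : (0:ℝ) < x ⬝ᵥ Cx⁻¹ *ᵥ x := h1
      linarith
  have hdet : IsUnit M.det := (Matrix.isUnit_iff_isUnit_det M).1 hMpos.isUnit
  have hMCe : ∀ v : Fin d → ℝ, M *ᵥ (Ce *ᵥ v) = v := by
    intro v
    rw [mulVec_mulVec, hCe, Matrix.mul_nonsing_inv _ hdet, one_mulVec]
  have hCeT : Ceᵀ = Ce := by rw [hCe, transpose_nonsing_inv, hMT]
  have hCepos : Ce.PosDef := hCe ▸ hMpos.inv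
  have hCen : ∀ u : Fin d → ℝ, 0 ≤ u ⬝ᵥ Ce *ᵥ u := pd_nonneg hCepos
  have hkey : ∀ (k : Fin m), ρ k * (h k ⬝ᵥ Ce *ᵥ h k) ≤ 1 := by
    intro k
    have e1 : (Ce *ᵥ h k) ⬝ᵥ M *ᵥ (Ce *ᵥ h k) = h k ⬝ᵥ Ce *ᵥ h k := by
      rw [hMCe, dotProduct_comm]
    have hq := hquad (Ce *ᵥ h k)
    have hsum : ρ k * (h k ⬝ᵥ Ce *ᵥ h k) ^ 2 ≤ ∑ l, ρ l * (h l ⬝ᵥ Ce *ᵥ h k) ^ 2 :=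
      Finset.single_le_sum (f := fun l => ρ l * (h l ⬝ᵥ Ce *ᵥ h k) ^ 2)
        (fun l _ => mul_nonneg (hρ l).le (sq_nonneg _)) (Finset.mem_univ k)
    have hq0 : 0 ≤ (Ce *ᵥ h k) ⬝ᵥ Cx⁻¹ *ᵥ (Ce *ᵥ h k) := pd_nonneg hCxi _
    have ht2 : ρ k * (h k ⬝ᵥ Ce *ᵥ h k) ^ 2 ≤ h k ⬝ᵥ Ce *ᵥ h k := by
      rw [e1] at hq
      linarith
    have htn : 0 ≤ h k ⬝ᵥ Ce *ᵥ h k := hCen (h k)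
    nlinarith [sq_nonneg (ρ k * (h k ⬝ᵥ Ce *ᵥ h k) - 1), (hρ k).le,
      mul_le_mul_of_nonneg_left ht2 (hρ k).le]
  have spec0 : 0 ≤ specNorm Cx := norm_nonneg _
  have hCxdet : IsUnit Cx.det := (Matrix.isUnit_iff_isUnit_det Cx).1 hCx.isUnit
  have nsq : ∀ u : Fin d → ℝ, u ⬝ᵥ u ≤ specNorm Cx * (u ⬝ᵥ Cx⁻¹ *ᵥ u) := by
    intro u
    have cs := csform (pd_transpose hCx) (pd_nonneg hCx) u (Cx⁻¹ *ᵥ u)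
    have e : Cx *ᵥ (Cx⁻¹ *ᵥ u) = u := by
      rw [mulVec_mulVec, Matrix.mul_nonsing_inv _ hCxdet, one_mulVec]
    rw [e] at cs
    rw [dotProduct_comm (Cx⁻¹ *ᵥ u) u] at cs
    have hspec := quad_le_spec Cx u
    have hq0 : 0 ≤ u ⬝ᵥ Cx⁻¹ *ᵥ u := pd_nonneg hCxi u
    have hun : 0 ≤ u ⬝ᵥ u := dotnn u
    rcases eq_or_lt_of_le hun with heq | hlt
    · nlinarith
    · nlinarith
  have hsb : ∀ (k : Fin m), ρ k * ((Ce *ᵥ h k) ⬝ᵥ (Ce *ᵥ h k)) ≤ specNorm Cx := by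
    intro k
    have h1 := nsq (Ce *ᵥ h k)
    have e1 : (Ce *ᵥ h k) ⬝ᵥ M *ᵥ (Ce *ᵥ h k) = h k ⬝ᵥ Ce *ᵥ h k := by
      rw [hMCe, dotProduct_comm]
    have hq := hquad (Ce *ᵥ h k)
    have hsum : 0 ≤ ∑ l, ρ l * (h l ⬝ᵥ Ce *ᵥ h k) ^ 2 :=
      Finset.sum_nonneg fun l _ => mul_nonneg (hρ l).le (sq_nonneg _)
    have h2 : (Ce *ᵥ h k) ⬝ᵥ Cx⁻¹ *ᵥ (Ce *ᵥ h k) ≤ h k ⬝ᵥ Ce *ᵥ h k := by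
      rw [← e1, hq]; linarith
    have hq0 : 0 ≤ (Ce *ᵥ h k) ⬝ᵥ Cx⁻¹ *ᵥ (Ce *ᵥ h k) := pd_nonneg hCxi _
    have hk1 := hkey k
    nlinarith [mul_le_mul_of_nonneg_left h1 (hρ k).le,
      mul_le_mul_of_nonneg_left h2 (mul_nonneg spec0 (hρ k).le),
      mul_le_mul_of_nonneg_left hk1 spec0]
  have hb : h i ⬝ᵥ (Ce ^ 2) *ᵥ h j = (Ce *ᵥ h j) ⬝ᵥ (Ce *ᵥ h i) := by
    rw [pow_two, ← mulVec_mulVec, symdot hCeT]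
  have hb2 : ((Ce *ᵥ h j) ⬝ᵥ (Ce *ᵥ h i)) ^ 2
      ≤ ((Ce *ᵥ h j) ⬝ᵥ (Ce *ᵥ h j)) * ((Ce *ᵥ h i) ⬝ᵥ (Ce *ᵥ h i)) := by
    have := csform (transpose_one (α := ℝ) (n := Fin d))
      (fun u => by rw [one_mulVec]; exact dotnn u) (Ce *ᵥ h j) (Ce *ᵥ h i)
    simpa [one_mulVec] using this
  rw [hb]
  exact final_arith (ρ i) (ρ j) (h i ⬝ᵥ Ce *ᵥ h j) ((Ce *ᵥ h j) ⬝ᵥ (Ce *ᵥ h i))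
    (h i ⬝ᵥ Ce *ᵥ h i) (h j ⬝ᵥ Ce *ᵥ h j) ((Ce *ᵥ h i) ⬝ᵥ (Ce *ᵥ h i))
    ((Ce *ᵥ h j) ⬝ᵥ (Ce *ᵥ h j)) (specNorm Cx) (hρ i) (hρ j)
    (hCen (h i)) (hCen (h j)) (dotnn _) (dotnn _) spec0
    (hkey i) (hkey j) (csform hCeT hCen (h i) (h j)) hb2 (hsb i) (hsb j)
end

section
/- Nonconvex Frank–Wolfe rate: Let F : ℝ^m → ℝ be differentiable with L-Lipschitz gradient on a compact convex set B of diameter D, and let iterates b^{(t+1)} = b^{(t)} + γ_t (s^{(t)} − b^{(t)}) with s^{(t)} ∈ argmin_{s∈B} ⟨∇F(b^{(t)}), s⟩, gap g_t = ⟨b^{(t)} − s^{(t)}, ∇F(b^{(t)})⟩, and step γ_t = min{g_t/(L D²), 1}. Then min_{0≤t≤T} g_t ≤ max{2(F(b^{(0)}) − min_B F), L D²} / √(T+1). -/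
lemma taylor_ub {E : Type*} [NormedAddCommGroup E] [NormedSpace ℝ E]
    (K : Set E) (hKconv : Convex ℝ K) (L : ℝ)
    (F : E → ℝ) (hFd : Differentiable ℝ F)
    (hLip : ∀ x ∈ K, ∀ y ∈ K, ‖fderiv ℝ F x - fderiv ℝ F y‖ ≤ L * dist x y)
    {x y : E} (hx : x ∈ K) (hy : y ∈ K) :
    F y ≤ F x + fderiv ℝ F x (y - x) + L / 2 * ‖y - x‖ ^ 2 := by
  set v := y - x with hv
  set c : ℝ → E := fun t => x + t • v with hc
  set φ' : ℝ → ℝ := fun t => fderiv ℝ F (c t) v with hφ'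
  have hcd : ∀ t u : ℝ, dist (c t) (c u) = |t - u| * ‖v‖ := by
    intro t u
    simp only [hc, dist_eq_norm]
    rw [show x + t • v - (x + u • v) = (t - u) • v by module, norm_smul,
      Real.norm_eq_abs]
  have hcmem : ∀ t ∈ Set.Icc (0:ℝ) 1, c t ∈ K := fun t ht =>
    hKconv.add_smul_sub_mem hx hy ht
  have hderiv : ∀ t : ℝ, HasDerivAt (fun u => F (c u)) (φ' t) t := by
    intro t
    have hc' : HasDerivAt c v t := by
      exact (((hasDerivAt_id t).smul_const v).const_add x).congr_deriv (one_smul ℝ v)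
    exact (hFd (c t)).hasFDerivAt.comp_hasDerivAt t hc'
  have hlipφ : LipschitzOnWith (Real.toNNReal (L * ‖v‖ ^ 2)) φ' (Set.Icc 0 1) := by
    rw [lipschitzOnWith_iff_dist_le_mul]
    intro t ht u hu
    have h1 : ‖fderiv ℝ F (c t) - fderiv ℝ F (c u)‖ ≤ L * dist (c t) (c u) :=
      hLip _ (hcmem t ht) _ (hcmem u hu)
    have hn : (0:ℝ) ≤ ‖v‖ := norm_nonneg _
    calc dist (φ' t) (φ' u) = ‖(fderiv ℝ F (c t) - fderiv ℝ F (c u)) v‖ := by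
          simp [hφ', dist_eq_norm]
      _ ≤ ‖fderiv ℝ F (c t) - fderiv ℝ F (c u)‖ * ‖v‖ :=
          (fderiv ℝ F (c t) - fderiv ℝ F (c u)).le_opNorm v
      _ ≤ L * dist (c t) (c u) * ‖v‖ := by nlinarith [mul_le_mul_of_nonneg_right h1 hn]
      _ = L * ‖v‖ ^ 2 * dist t u := by rw [hcd, Real.dist_eq]; ring
      _ ≤ Real.toNNReal (L * ‖v‖ ^ 2) * dist t u := by
          gcongr; exact Real.le_coe_toNNReal _
  have hint : IntervalIntegrable φ' MeasureTheory.volume 0 1 := by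
    apply ContinuousOn.intervalIntegrable
    rw [Set.uIcc_of_le (by norm_num : (0:ℝ) ≤ 1)]
    exact hlipφ.continuousOn
  have hftc : ∫ t in (0:ℝ)..1, φ' t = F (c 1) - F (c 0) :=
    intervalIntegral.integral_eq_sub_of_hasDerivAt (fun t _ => hderiv t) hint
  have hc0 : c 0 = x := by simp [hc]
  have hc1 : c 1 = y := by simp [hc, hv]
  have hbound : ∀ t ∈ Set.Icc (0:ℝ) 1, φ' t ≤ φ' 0 + L * ‖v‖ ^ 2 * t := by
    intro t ht
    have h1 : ‖fderiv ℝ F (c t) - fderiv ℝ F (c 0)‖ ≤ L * dist (c t) (c 0) :=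
      hLip _ (hcmem t ht) _ (hcmem 0 (by norm_num))
    have hdist : dist (c t) (c 0) = t * ‖v‖ := by
      rw [hcd]; simp [abs_of_nonneg ht.1]
    rw [hdist] at h1
    have h2 : φ' t - φ' 0 ≤ ‖(fderiv ℝ F (c t) - fderiv ℝ F (c 0)) v‖ := by
      have h : φ' t - φ' 0 = (fderiv ℝ F (c t) - fderiv ℝ F (c 0)) v := by
        simp [hφ']
      rw [h]; exact le_abs_self _
    have h3 : ‖(fderiv ℝ F (c t) - fderiv ℝ F (c 0)) v‖ ≤
        ‖fderiv ℝ F (c t) - fderiv ℝ F (c 0)‖ * ‖v‖ :=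
      (fderiv ℝ F (c t) - fderiv ℝ F (c 0)).le_opNorm v
    have hn : (0:ℝ) ≤ ‖v‖ := norm_nonneg _
    nlinarith [mul_le_mul_of_nonneg_right h1 hn]
  have hintg2 : IntervalIntegrable (fun t => φ' 0 + L * ‖v‖ ^ 2 * t)
      MeasureTheory.volume 0 1 :=
    intervalIntegrable_const.add (intervalIntegral.intervalIntegrable_id.const_mul _)
  have hintg : ∫ t in (0:ℝ)..1, (φ' 0 + L * ‖v‖ ^ 2 * t) = φ' 0 + L / 2 * ‖v‖ ^ 2 := by
    rw [intervalIntegral.integral_add intervalIntegrable_const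
      (intervalIntegral.intervalIntegrable_id.const_mul _),
      intervalIntegral.integral_const_mul, integral_id]
    simp; ring
  have hmono : ∫ t in (0:ℝ)..1, φ' t ≤ ∫ t in (0:ℝ)..1, (φ' 0 + L * ‖v‖ ^ 2 * t) :=
    intervalIntegral.integral_mono_on (by norm_num) hint hintg2 hbound
  have hφ'0 : φ' 0 = fderiv ℝ F x v := by
    show fderiv ℝ F (c 0) v = fderiv ℝ F x v
    rw [hc0]
  rw [hftc, hc0, hc1] at hmono
  rw [hintg, hφ'0] at hmono
  linarith

/-- Nonconvex Frank–Wolfe rate: Let `F` be differentiable with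
`L`-Lipschitz gradient on a compact convex set `K` of diameter `D`, and let the
iterates satisfy `b^{(t+1)} = b^{(t)} + γ_t (s^{(t)} − b^{(t)})` with
`s^{(t)} ∈ argmin_{s∈K} ⟨∇F(b^{(t)}), s⟩`, gap
`g_t = ⟨b^{(t)} − s^{(t)}, ∇F(b^{(t)})⟩`, and step `γ_t = min{g_t/(L D²), 1}`.
Then `min_{0≤t≤T} g_t ≤ max{2(F(b⁰) − min_K F), L D²} / √(T+1)`. -/
theorem stmt15 {m : ℕ} (K : Set (EuclideanSpace ℝ (Fin m)))
    (hKc : IsCompact K) (hKne : K.Nonempty) (hKconv : Convex ℝ K)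
    (D L : ℝ) (hL : 0 < L)
    (hD : ∀ x ∈ K, ∀ y ∈ K, dist x y ≤ D)
    (F : EuclideanSpace ℝ (Fin m) → ℝ) (hFd : Differentiable ℝ F)
    (hLip : ∀ x ∈ K, ∀ y ∈ K, ‖fderiv ℝ F x - fderiv ℝ F y‖ ≤ L * dist x y)
    (b s : ℕ → EuclideanSpace ℝ (Fin m)) (γ gap : ℕ → ℝ)
    (hb0 : b 0 ∈ K)
    (hs : ∀ t, s t ∈ K ∧ ∀ u ∈ K, fderiv ℝ F (b t) (s t) ≤ fderiv ℝ F (b t) u)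
    (hgap : ∀ t, gap t = fderiv ℝ F (b t) (b t - s t))
    (hγ : ∀ t, γ t = min (gap t / (L * D ^ 2)) 1)
    (hupd : ∀ t, b (t + 1) = b t + γ t • (s t - b t))
    (T : ℕ) :
    ∃ t ≤ T, gap t ≤
      max (2 * (F (b 0) - sInf (F '' K))) (L * D ^ 2) / Real.sqrt (T + 1) := by
  -- basic facts
  have hD0 : 0 ≤ D := le_trans dist_nonneg (hD _ hKne.choose_spec _ hKne.choose_spec)
  set C : ℝ := L * D ^ 2 with hCdef
  have hC0 : 0 ≤ C := by positivity
  have hbdd : BddBelow (F '' K) := (hKc.image_of_continuousOn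
    hFd.continuous.continuousOn).bddBelow
  have hinf_le : ∀ z ∈ K, sInf (F '' K) ≤ F z := fun z hz =>
    csInf_le hbdd ⟨z, hz, rfl⟩
  set h0 : ℝ := F (b 0) - sInf (F '' K) with hh0def
  have hh0 : 0 ≤ h0 := by
    have := hinf_le _ hb0; simp only [hh0def]; linarith
  set M : ℝ := max (2 * h0) C with hMdef
  have hM0 : 0 ≤ M := le_trans (by linarith) (le_max_left _ _)
  have hsqpos : 0 < Real.sqrt (T + 1) := Real.sqrt_pos.2 (by positivity)
  -- membership of iterates
  have hmem : ∀ t, b t ∈ K := by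
    intro t
    induction t with
    | zero => exact hb0
    | succ n ih =>
      have hg : 0 ≤ gap n := by
        rw [hgap, map_sub]
        have := (hs n).2 (b n) ih
        linarith
      have hγ0 : 0 ≤ γ n := by
        rw [hγ]; exact le_min (div_nonneg hg hC0) one_pos.le
      have hγ1 : γ n ≤ 1 := by rw [hγ]; exact min_le_right _ _
      rw [hupd]
      exact hKconv.add_smul_sub_mem ih (hs n).1 ⟨hγ0, hγ1⟩
  have hgapnn : ∀ t, 0 ≤ gap t := by
    intro t
    rw [hgap, map_sub]
    have := (hs t).2 (b t) (hmem t)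
    linarith
  have hγ0 : ∀ t, 0 ≤ γ t := fun t => by
    rw [hγ]; exact le_min (div_nonneg (hgapnn t) hC0) one_pos.le
  -- degenerate case D = 0
  by_cases hDz : D = 0
  · refine ⟨0, Nat.zero_le _, ?_⟩
    have hsb : s 0 = b 0 := by
      have h1 := hD _ ((hs 0).1) _ hb0
      rw [hDz] at h1
      exact dist_le_zero.1 h1
    have : gap 0 = 0 := by rw [hgap, hsb, sub_self, map_zero]
    rw [this]
    positivity
  have hDpos : 0 < D := lt_of_le_of_ne hD0 (Ne.symm hDz)
  have hCpos : 0 < C := by positivity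
  -- descent lemma
  have hdesc : ∀ t, F (b (t + 1)) ≤ F (b t) - γ t * gap t + γ t ^ 2 * C / 2 := by
    intro t
    have htay := taylor_ub K hKconv L F hFd hLip (hmem t) (hmem (t + 1))
    have hdiff : b (t + 1) - b t = γ t • (s t - b t) := by
      rw [hupd]; abel
    have h1 : fderiv ℝ F (b t) (b (t + 1) - b t) = -(γ t * gap t) := by
      rw [hdiff, map_smul, hgap]
      rw [show s t - b t = -(b t - s t) by abel, map_neg]
      simp [mul_comm]
      ring
    have h2 : ‖b (t + 1) - b t‖ ^ 2 ≤ γ t ^ 2 * D ^ 2 := by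
      rw [hdiff, norm_smul, Real.norm_eq_abs, abs_of_nonneg (hγ0 t), mul_pow]
      have h3 : ‖s t - b t‖ ≤ D := by
        rw [← dist_eq_norm]; exact hD _ (hs t).1 _ (hmem t)
      have h4 : (0:ℝ) ≤ ‖s t - b t‖ := norm_nonneg _
      exact mul_le_mul_of_nonneg_left (pow_le_pow_left₀ h4 h3 2) (sq_nonneg _)
    rw [h1] at htay
    have h5 : L / 2 * ‖b (t + 1) - b t‖ ^ 2 ≤ γ t ^ 2 * C / 2 := by
      rw [hCdef]; nlinarith
    linarith
  -- per-step decrease bound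
  have hdec : ∀ t, min (gap t ^ 2 / (2 * C)) (gap t / 2) ≤ F (b t) - F (b (t + 1)) := by
    intro t
    have hd := hdesc t
    rcases le_or_gt (gap t) C with hle | hlt
    · have hγeq : γ t = gap t / C := by
        rw [hγ]; exact min_eq_left ((div_le_one hCpos).2 hle)
      have : γ t * gap t - γ t ^ 2 * C / 2 = gap t ^ 2 / (2 * C) := by
        rw [hγeq]; field_simp; ring
      have hmin := min_le_left (gap t ^ 2 / (2 * C)) (gap t / 2)
      linarith
    · have hγeq : γ t = 1 := by
        rw [hγ]; exact min_eq_right ((one_le_div hCpos).2 hlt.le)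
      have hmin := min_le_right (gap t ^ 2 / (2 * C)) (gap t / 2)
      rw [hγeq] at hd
      linarith
  -- pick minimizing index
  obtain ⟨t₀, ht₀mem, ht₀min⟩ := Finset.exists_min_image (Finset.range (T + 1))
    gap ⟨0, Finset.mem_range.2 (Nat.succ_pos _)⟩
  refine ⟨t₀, Nat.lt_succ_iff.1 (Finset.mem_range.1 ht₀mem), ?_⟩
  set g₀ : ℝ := gap t₀ with hg₀def
  have hg₀nn : 0 ≤ g₀ := hgapnn t₀
  -- summation
  have hsum : (T + 1 : ℝ) * min (g₀ ^ 2 / (2 * C)) (g₀ / 2) ≤ h0 := by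
    have htel : ∑ t ∈ Finset.range (T + 1), (F (b t) - F (b (t + 1)))
        = F (b 0) - F (b (T + 1)) := Finset.sum_range_sub' (fun t => F (b t)) (T + 1)
    have hterm : ∀ t ∈ Finset.range (T + 1),
        min (g₀ ^ 2 / (2 * C)) (g₀ / 2) ≤ F (b t) - F (b (t + 1)) := by
      intro t ht
      have h2 := ht₀min t ht
      refine le_trans (min_le_min ?_ ?_) (hdec t)
      · gcongr
      · linarith
    have hsum2 : ∑ t ∈ Finset.range (T + 1), min (g₀ ^ 2 / (2 * C)) (g₀ / 2)
        ≤ ∑ t ∈ Finset.range (T + 1), (F (b t) - F (b (t + 1))) :=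
      Finset.sum_le_sum hterm
    rw [Finset.sum_const, Finset.card_range] at hsum2
    rw [htel] at hsum2
    have hlast := hinf_le _ (hmem (T + 1))
    simp only [nsmul_eq_mul] at hsum2
    push_cast at hsum2 ⊢
    simp only [hh0def]
    linarith
  -- conclude
  set N : ℝ := (T + 1 : ℝ) with hNdef
  have hN1 : 1 ≤ N := by
    simp only [hNdef]
    have : (0:ℝ) ≤ T := Nat.cast_nonneg T
    linarith
  have hNpos : 0 < N := by linarith
  set sq : ℝ := Real.sqrt (T + 1) with hsqdef
  have hsqN : sq ^ 2 = N := Real.sq_sqrt (by positivity)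
  have hsqnn : 0 ≤ sq := Real.sqrt_nonneg _
  have hsqleN : sq ≤ N := by nlinarith [sq_nonneg (sq - 1)]
  rcases min_cases (g₀ ^ 2 / (2 * C)) (g₀ / 2) with ⟨heq, _⟩ | ⟨heq, _⟩
  · -- g₀² N ≤ 2 C h0 ≤ M²
    rw [heq] at hsum
    have h1 : g₀ ^ 2 * N ≤ 2 * C * h0 := by
      have h2 : N * (g₀ ^ 2 / (2 * C)) ≤ h0 := hsum
      calc g₀ ^ 2 * N = (N * (g₀ ^ 2 / (2 * C))) * (2 * C) := by
            field_simp
        _ ≤ h0 * (2 * C) := by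
            apply mul_le_mul_of_nonneg_right h2; positivity
        _ = 2 * C * h0 := by ring
    have h2 : 2 * C * h0 ≤ M ^ 2 := by
      have ha : 2 * h0 ≤ M := le_max_left _ _
      have hb' : C ≤ M := le_max_right _ _
      calc 2 * C * h0 = C * (2 * h0) := by ring
        _ ≤ M * M := mul_le_mul hb' ha (by linarith) hM0
        _ = M ^ 2 := by ring
    have h3 : (g₀ * sq) ^ 2 ≤ M ^ 2 := by
      rw [mul_pow, hsqN]; linarith
    have h4 : g₀ * sq ≤ M := by
      nlinarith [mul_nonneg hg₀nn hsqnn]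
    rw [le_div_iff₀ hsqpos]
    exact h4
  · rw [heq] at hsum
    have h1 : g₀ ≤ 2 * h0 / N := by
      rw [le_div_iff₀ hNpos]
      calc g₀ * N = 2 * (N * (g₀ / 2)) := by ring
        _ ≤ 2 * h0 := by linarith
    have h2 : 2 * h0 / N ≤ 2 * h0 / sq := by
      apply div_le_div_of_nonneg_left (by linarith) hsqpos hsqleN
    have h3 : 2 * h0 / sq ≤ M / sq := by
      gcongr
      exact le_max_left _ _
    calc g₀ ≤ 2 * h0 / N := h1
      _ ≤ 2 * h0 / sq := h2
      _ ≤ M / sq := h3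
end
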